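/- For an explanation system given by a partition of the instance space (as in a decision tree, where each explanation π corresponds to the cell C_π = {x : e(x) = π}), the global consistency satisfies m^c = 1 − Σ_{π : p(π)>0} p(π) · G(π), where G(π) = 1 − Σ_y p(y|π)² is the Gini index of the predicted labels within C_π. -/

import Mathlib

open Classical

/-- For a partition-based explanation system (e.g. a decision tree), the global
consistency satisfies `m^c = 1 - ∑_{π : p(π)>0} p(π) · G(π)`, where
`G(π) = 1 - ∑_y p(y|π)²` is the Gini index of the predicted labels in `C_π`. -/
theorem global_consistency_eq_one_sub_gini {X Y E : Type*}
    [Fintype X] [Fintype Y] [Fintype E] [Nonempty X] [Nonempty Y] [Nonempty E]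
    (μ : X → ℝ) (hμ0 : ∀ x, 0 ≤ μ x) (hμ1 : ∑ x, μ x = 1)
    (f : X → Y) (e : X → E)
    -- p(π) = μ{x : e(x) = π}
    (p : E → ℝ) (hp : ∀ π, p π = ∑ x, if e x = π then μ x else 0)
    -- for p(π) > 0, p(y|π) = μ{x : e(x) = π ∧ f(x) = y} / p(π)
    (pc : Y → E → ℝ)
    (hpc : ∀ y π, 0 < p π →
      pc y π = (∑ x, if e x = π ∧ f x = y then μ x else 0) / p π)
    -- global consistency m^c = Σ_x μ(x) · p(f(x)|e(x))
    (mc : ℝ) (hmc : mc = ∑ x, μ x * pc (f x) (e x))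
    -- Gini index of f within C_π
    (G : E → ℝ) (hG : ∀ π, 0 < p π → G π = 1 - ∑ y, (pc y π) ^ 2) :
    mc = 1 - ∑ π ∈ Finset.univ.filter (fun π => 0 < p π), p π * G π := by
  have hpnn : ∀ π, 0 ≤ p π := by
    intro π; rw [hp π]
    exact Finset.sum_nonneg fun x _ => by split_ifs; exacts [hμ0 x, le_rfl]
  have hμ0' : ∀ x, ¬ 0 < p (e x) → μ x = 0 := by
    intro x hx
    have hple : μ x ≤ p (e x) := by
      rw [hp]
      have := Finset.single_le_sum
        (f := fun z => if e z = e x then μ z else 0)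
        (fun z _ => by split_ifs; exacts [hμ0 z, le_rfl]) (Finset.mem_univ x)
      simpa using this
    have : p (e x) = 0 := le_antisymm (not_lt.mp hx) (hpnn _)
    exact le_antisymm (this ▸ hple) (hμ0 x)
  -- total mass of positive cells is 1
  have hsum1 : ∑ π ∈ Finset.univ.filter (fun π => 0 < p π), p π = 1 := by
    have h0 : ∑ π, p π = 1 := by
      calc ∑ π, p π = ∑ π, ∑ x, if e x = π then μ x else 0 := by
            exact Finset.sum_congr rfl fun π _ => hp π
        _ = ∑ x, ∑ π, if e x = π then μ x else 0 := Finset.sum_comm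
        _ = ∑ x, μ x := by
            refine Finset.sum_congr rfl fun x _ => ?_
            simp
        _ = 1 := hμ1
    rw [← h0]
    exact Finset.sum_filter_of_ne fun π _ hne => lt_of_le_of_ne (hpnn π) (Ne.symm hne)
  -- rewrite mc fiberwise
  have key : mc = ∑ π ∈ Finset.univ.filter (fun π => 0 < p π), p π * (1 - G π) := by
    rw [hmc]
    calc ∑ x, μ x * pc (f x) (e x)
        = ∑ π, ∑ x, if e x = π then μ x * pc (f x) π else 0 := by
          rw [Finset.sum_comm]
          refine Finset.sum_congr rfl fun x _ => ?_
          simp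
      _ = ∑ π ∈ Finset.univ.filter (fun π => 0 < p π),
            ∑ x, if e x = π then μ x * pc (f x) π else 0 := by
          symm
          refine Finset.sum_filter_of_ne fun π _ hne => ?_
          by_contra h
          refine hne (Finset.sum_eq_zero fun x _ => ?_)
          split
          · next hex => rw [hμ0' x (hex ▸ h), zero_mul]
          · rfl
      _ = ∑ π ∈ Finset.univ.filter (fun π => 0 < p π), p π * (1 - G π) := by
          refine Finset.sum_congr rfl fun π hπ => ?_
          have hpos : 0 < p π := (Finset.mem_filter.mp hπ).2
          have step : ∑ x, (if e x = π then μ x * pc (f x) π else 0)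
              = ∑ y, pc y π * ∑ x, (if e x = π ∧ f x = y then μ x else 0) := by
            have h1 : ∀ x : X, (if e x = π then μ x * pc (f x) π else 0)
                = ∑ y, (if e x = π ∧ f x = y then μ x * pc y π else 0) := by
              intro x
              by_cases hx : e x = π
              · simp [hx, Finset.sum_ite_eq]
              · simp [hx]
            simp only [h1]
            rw [Finset.sum_comm]
            refine Finset.sum_congr rfl fun y _ => ?_
            rw [Finset.mul_sum]
            refine Finset.sum_congr rfl fun x _ => ?_
            split_ifs <;> ring
          rw [step]
          have : ∀ y, pc y π * ∑ x, (if e x = π ∧ f x = y then μ x else 0)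
              = pc y π ^ 2 * p π := by
            intro y
            have h := hpc y π hpos
            have : (∑ x, if e x = π ∧ f x = y then μ x else 0) = pc y π * p π := by
              rw [h]; field_simp
            rw [this]; ring
          rw [Finset.sum_congr rfl fun y _ => this y, ← Finset.sum_mul,
            hG π hpos]
          ring
  rw [key, Finset.sum_congr rfl (fun π _ => by ring :
    ∀ π ∈ Finset.univ.filter (fun π => 0 < p π),
      p π * (1 - G π) = p π - p π * G π),
    Finset.sum_sub_distrib, hsum1]
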